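/- Any minimal partial clique D' on at least 2 vertices with minimum out-degree δ⁺(D') = 1 is a directed cycle. -/

import Mathlib

open Finset
open scoped Classical

universe u

variable {V : Type u}

/-- `l` is a directed cycle: nonempty, distinct vertices, consecutive arcs, wrap-around arc. -/
def IsCycle (A : V → V → Prop) (l : List V) : Prop :=
  l ≠ [] ∧ l.Nodup ∧ l.Chain' A ∧
    ∀ a b, l.getLast? = some a → l.head? = some b → A a b

/-- `l` is a directed path from `i` to `j`. -/
def IsPath (A : V → V → Prop) (l : List V) (i j : V) : Prop :=
  l.Nodup ∧ l.Chain' A ∧ l.head? = some i ∧ l.getLast? = some j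

/-- An I-path w.r.t. inner vertex set `VI`: a path between two distinct inner vertices
whose interior vertices are all non-inner. -/
def IsIPath [DecidableEq V] (A : V → V → Prop) (VI : Finset V) (l : List V) (i j : V) : Prop :=
  IsPath A l i j ∧ i ∈ VI ∧ j ∈ VI ∧ i ≠ j ∧ ∀ v ∈ l.dropLast.drop 1, v ∉ VI

/-- An I-cycle: a directed cycle containing exactly one inner vertex. -/
def IsICycle [DecidableEq V] (A : V → V → Prop) (VI : Finset V) (l : List V) : Prop :=
  IsCycle A l ∧ (l.toFinset ∩ VI).card = 1

/-- A K-IC structure: exactly one I-path between each ordered pair of distinct inner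
vertices, and no I-cycle. -/
def IsKIC [DecidableEq V] (A : V → V → Prop) (VI : Finset V) : Prop :=
  (∀ i ∈ VI, ∀ j ∈ VI, i ≠ j → ∃! l : List V, IsIPath A VI l i j) ∧
  ∀ l : List V, ¬ IsICycle A VI l

/-- Out-degree of a vertex. -/
noncomputable def outDeg [Fintype V] (A : V → V → Prop) (v : V) : ℕ :=
  (univ.filter fun w => A v w).card

/-- Minimum out-degree of a digraph. -/
noncomputable def minOutDeg [Fintype V] [Nonempty V] (A : V → V → Prop) : ℕ :=
  univ.inf' univ_nonempty (outDeg A)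

/-- Out-degree of `v` within the subdigraph induced on `s`. -/
noncomputable def outDegOn (A : V → V → Prop) (s : Finset V) (v : V) : ℕ :=
  (s.filter fun w => A v w).card

/-- Minimum out-degree of the subdigraph induced on `s` (0 if `s` is empty). -/
noncomputable def minOutDegOn (A : V → V → Prop) (s : Finset V) : ℕ :=
  if h : s.Nonempty then s.inf' h (outDegOn A s) else 0

/-- Induced arc relation on a vertex subset. -/
def inducedRel (A : V → V → Prop) (s : Finset V) : V → V → Prop :=
  fun u v => u ∈ s ∧ v ∈ s ∧ A u v

/-- A valid index code of length `p` for `t`-bit messages: the messages of every receiver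
are determined by the codeword together with its side information (its out-neighbours'
messages). -/
def IsIndexCode [Fintype V] (A : V → V → Prop) (t p : ℕ)
    (F : (V → (Fin t → ZMod 2)) → (Fin p → ZMod 2)) : Prop :=
  ∀ x y : V → (Fin t → ZMod 2), F x = F y →
    ∀ i : V, (∀ q, A i q → x q = y q) → x i = y i

/-- No directed cycle lies entirely inside `s`. -/
def AcyclicOn (A : V → V → Prop) (s : Finset V) : Prop :=
  ∀ l : List V, IsCycle A l → ¬ (∀ v ∈ l, v ∈ s)

/-- `s` (as a partial clique) is minimal: its savings `δ⁺` strictly exceed the total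
savings of any partition of `s` into at least two parts. -/
def IsMinimalPC [DecidableEq V] (A : V → V → Prop) (s : Finset V) : Prop :=
  ∀ P : Finpartition s, 2 ≤ P.parts.card →
    ∑ p ∈ P.parts, minOutDegOn A p < minOutDegOn A s

/-- A directed rooted tree inside the digraph `A`, rooted at inner vertex `i`, whose
leaves are exactly the other inner vertices and whose internal vertices are non-inner. -/
structure IsICTree [DecidableEq V] (A : V → V → Prop) (VI : Finset V) (i : V)
    (T : V → V → Prop) : Prop where
  sub : ∀ u v, T u v → A u v
  root_mem : i ∈ VI
  root_no_parent : ∀ u, ¬ T u i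
  unique_parent : ∀ u u' v, T u v → T u' v → u = u'
  reach : ∀ j ∈ VI, j ≠ i → Relation.ReflTransGen T i j
  leaf : ∀ j ∈ VI, j ≠ i → ∀ w, ¬ T j w
  connected : ∀ u v, T u v → Relation.ReflTransGen T i u
  acyclic : ∀ v, ¬ Relation.TransGen T v v

/-- The Class-A digraph on `3*m` vertices (`K = 2*m` inner vertices `0,…,K-1`,
outer vertices `K,…,3m-1`): outer vertex `K+i` has arcs to inner `2i` and `2i+1`;
inner `2i` and `2i+1` have mutual arcs and arcs to every outer vertex except `K+i`. -/
def classARel (m : ℕ) : Fin (3 * m) → Fin (3 * m) → Prop := fun u v =>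
  (2 * m ≤ u.val ∧ v.val < 2 * m ∧ v.val / 2 = u.val - 2 * m) ∨
  (u.val < 2 * m ∧ v.val < 2 * m ∧ u.val / 2 = v.val / 2 ∧ u ≠ v) ∨
  (u.val < 2 * m ∧ 2 * m ≤ v.val ∧ v.val - 2 * m ≠ u.val / 2)


lemma closedEqUniv {V : Type u} [Fintype V] [DecidableEq V] [Nonempty V]
    (A : V → V → Prop)
    (hmin : IsMinimalPC A (univ : Finset V))
    (hδ : minOutDegOn A (univ : Finset V) = 1)
    (s : Finset V) (hs : s.Nonempty) (hcl : ∀ v ∈ s, ∃ u ∈ s, A v u) :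
    s = univ := by
  by_contra hne
  have hsc : sᶜ.Nonempty :=
    Finset.nonempty_iff_ne_empty.2 fun h => hne ((Finset.compl_eq_empty_iff s).1 h)
  have hne' : s ≠ sᶜ := by
    intro h
    have hd : Disjoint s s := by
      conv_rhs => rw [h]
      exact disjoint_compl_right
    exact hs.ne_empty (disjoint_self.1 hd)
  have hnotmem : s ∉ ({sᶜ} : Finset (Finset V)) := by
    simp only [Finset.mem_singleton]
    exact hne'
  set P : Finpartition (univ : Finset V) :=
    { parts := {s, sᶜ}
      supIndep := (Finset.supIndep_pair hne').2 (by simpa using disjoint_compl_right)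
      sup_parts := by
        simp [Finset.sup_insert, Finset.sup_singleton, Finset.sup_eq_union,
          Finset.union_compl]
      bot_notMem := by
        simp only [Finset.bot_eq_empty, Finset.mem_insert, Finset.mem_singleton]
        push_neg
        exact ⟨Ne.symm hs.ne_empty, Ne.symm hsc.ne_empty⟩ } with hP
  have hcard : P.parts.card = 2 := by
    show ({s, sᶜ} : Finset (Finset V)).card = 2
    rw [Finset.card_insert_of_notMem hnotmem, Finset.card_singleton]
  have hlt := hmin P (le_of_eq hcard.symm)
  rw [hδ] at hlt
  have hsum : ∑ p ∈ P.parts, minOutDegOn A p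
      = minOutDegOn A s + minOutDegOn A sᶜ := by
    show ∑ p ∈ ({s, sᶜ} : Finset (Finset V)), minOutDegOn A p
      = minOutDegOn A s + minOutDegOn A sᶜ
    rw [Finset.sum_insert hnotmem, Finset.sum_singleton]
  have hge : 1 ≤ minOutDegOn A s := by
    rw [minOutDegOn, dif_pos hs]
    apply Finset.le_inf'
    intro v hv
    obtain ⟨u, hu, hA⟩ := hcl v hv
    have : u ∈ s.filter (fun w => A v w) := by
      simp [hu, hA]
    rw [outDegOn]
    exact Finset.card_pos.2 ⟨u, this⟩
  rw [hsum] at hlt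
  omega

/-- A minimal partial clique on at least two vertices with minimum out-degree 1 is a
single directed cycle through all its vertices. -/
theorem stmt14 {V : Type u} [Fintype V] [DecidableEq V] [Nonempty V]
    (A : V → V → Prop) (h2 : 2 ≤ Fintype.card V)
    (hmin : IsMinimalPC A (univ : Finset V))
    (hδ : minOutDegOn A (univ : Finset V) = 1) :
    ∃ l : List V, l.Nodup ∧ l.toFinset = (univ : Finset V) ∧
      ∀ u v : V, A u v ↔
        ([u, v] <:+: l ∨ (l.getLast? = some u ∧ l.head? = some v)) := by
  classical
  set n := Fintype.card V with hn
  -- every vertex has an out-neighbour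
  have hout : ∀ v : V, ∃ u, A v u := by
    intro v
    rw [minOutDegOn, dif_pos Finset.univ_nonempty] at hδ
    have h1 : (1:ℕ) ≤ outDegOn A univ v := by
      rw [← hδ]
      exact Finset.inf'_le _ (Finset.mem_univ v)
    rw [outDegOn] at h1
    obtain ⟨u, hu⟩ := Finset.card_pos.1 h1
    exact ⟨u, (Finset.mem_filter.1 hu).2⟩
  choose f hf using hout
  -- a periodic point
  obtain ⟨w, hEx⟩ : ∃ (w : V), ∃ k, 0 < k ∧ f^[k] w = w := by
    set x0 : V := Classical.arbitrary V with hx0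
    obtain ⟨i, j, hij, heqij⟩ :=
      Finite.exists_ne_map_eq_of_infinite (fun k : ℕ => f^[k] x0)
    obtain ⟨i, j, hlt, heq⟩ : ∃ i j : ℕ, i < j ∧ f^[i] x0 = f^[j] x0 := by
      rcases lt_or_gt_of_ne hij with h | h
      · exact ⟨i, j, h, heqij⟩
      · exact ⟨j, i, h, heqij.symm⟩
    refine ⟨f^[i] x0, j - i, by omega, ?_⟩
    rw [← Function.iterate_add_apply]
    have hji : j - i + i = j := by omega
    rw [hji, ← heq]
  set p : ℕ := Nat.find hEx with hpdef
  obtain ⟨hppos, hpw⟩ := Nat.find_spec hEx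
  -- injectivity of iterates below p
  have key : ∀ a b : ℕ, a < b → b < p → f^[a] w ≠ f^[b] w := by
    intro a b hab hbp habeq
    have h1 : f^[p - b + a] w = w := by
      have h2 : f^[p - b] (f^[a] w) = f^[p - b] (f^[b] w) := by rw [habeq]
      rw [← Function.iterate_add_apply, ← Function.iterate_add_apply] at h2
      have hb : p - b + b = p := by omega
      rw [hb, hpw] at h2
      exact h2
    exact Nat.find_min hEx (by omega) ⟨by omega, h1⟩
  -- the iterate set is closed, hence all of V
  set S : Finset V := (Finset.range p).image (fun t => f^[t] w) with hS
  have hSne : S.Nonempty := ⟨w, Finset.mem_image.2 ⟨0, Finset.mem_range.2 hppos, rfl⟩⟩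
  have hScl : ∀ v ∈ S, ∃ u ∈ S, A v u := by
    intro v hv
    obtain ⟨t, ht, rfl⟩ := Finset.mem_image.1 hv
    rw [Finset.mem_range] at ht
    refine ⟨f (f^[t] w), ?_, hf _⟩
    rw [show f (f^[t] w) = f^[t + 1] w from (Function.iterate_succ_apply' f t w).symm]
    by_cases h : t + 1 < p
    · exact Finset.mem_image.2 ⟨t + 1, Finset.mem_range.2 h, rfl⟩
    · have : t + 1 = p := by omega
      rw [this, hpw]
      exact Finset.mem_image.2 ⟨0, Finset.mem_range.2 hppos, rfl⟩
  have hSuniv : S = univ := closedEqUniv A hmin hδ S hSne hScl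
  have hpn : p = n := by
    have h1 : S.card = p := by
      rw [hS, Finset.card_image_of_injOn, Finset.card_range]
      intro a ha b hb hab
      rw [Finset.mem_coe, Finset.mem_range] at ha hb
      by_contra hne2
      rcases lt_or_gt_of_ne hne2 with h | h
      · exact key a b h hb hab
      · exact key b a h ha hab.symm
    rw [hSuniv, Finset.card_univ] at h1
    exact h1.symm
  have hwn : f^[n] w = w := by rw [← hpn]; exact hpw
  -- everybody is an iterate of w
  have hrep : ∀ x : V, ∃ t, t < n ∧ f^[t] w = x := by
    intro x
    have hx : x ∈ S := by rw [hSuniv]; exact Finset.mem_univ x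
    obtain ⟨t, ht, h⟩ := Finset.mem_image.1 hx
    exact ⟨t, by rw [← hpn]; exact Finset.mem_range.1 ht, h⟩
  have hfix : ∀ x : V, f^[n] x = x := by
    intro x
    obtain ⟨t, ht, rfl⟩ := hrep x
    rw [← Function.iterate_add_apply, Nat.add_comm, Function.iterate_add_apply, hwn]
  -- no chords: any arc goes to the f-successor
  have hchord : ∀ u v : V, A u v → v = f u := by
    intro u v hA
    obtain ⟨r, hr, hru⟩ := hrep u
    obtain ⟨s, hs, hsv⟩ := hrep v
    have hEx2 : ∃ k, f^[k] v = u := by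
      by_cases hrs : s ≤ r
      · refine ⟨r - s, ?_⟩
        rw [← hsv, ← Function.iterate_add_apply]
        have : r - s + s = r := by omega
        rw [this, hru]
      · refine ⟨n + r - s, ?_⟩
        rw [← hsv, ← Function.iterate_add_apply]
        have : n + r - s + s = r + n := by omega
        rw [this, Function.iterate_add_apply, hwn, hru]
    set k : ℕ := Nat.find hEx2 with hkdef
    have hk : f^[k] v = u := Nat.find_spec hEx2
    have hkn : k < n := by
      have h1 : k ≤ (if s ≤ r then r - s else n + r - s) := by
        apply Nat.find_le
        split_ifs with hrs
        · rw [← hsv, ← Function.iterate_add_apply]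
          have : r - s + s = r := by omega
          rw [this, hru]
        · rw [← hsv, ← Function.iterate_add_apply]
          have : n + r - s + s = r + n := by omega
          rw [this, Function.iterate_add_apply, hwn, hru]
      split_ifs at h1 with hrs <;> omega
    -- the set of iterates of v up to k is closed
    set T : Finset V := (Finset.range (k + 1)).image (fun t => f^[t] v) with hT
    have hTne : T.Nonempty :=
      ⟨v, Finset.mem_image.2 ⟨0, Finset.mem_range.2 (by omega), rfl⟩⟩
    have hTcl : ∀ x ∈ T, ∃ u' ∈ T, A x u' := by
      intro x hx
      obtain ⟨t, ht, rfl⟩ := Finset.mem_image.1 hx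
      rw [Finset.mem_range] at ht
      by_cases h : t < k
      · refine ⟨f (f^[t] v), ?_, hf _⟩
        rw [show f (f^[t] v) = f^[t + 1] v from (Function.iterate_succ_apply' f t v).symm]
        exact Finset.mem_image.2 ⟨t + 1, Finset.mem_range.2 (by omega), rfl⟩
      · have ht' : t = k := by omega
        refine ⟨v, Finset.mem_image.2 ⟨0, Finset.mem_range.2 (by omega), rfl⟩, ?_⟩
        rw [ht', hk]
        exact hA
    have hTuniv : T = univ := closedEqUniv A hmin hδ T hTne hTcl
    have hncard : n ≤ k + 1 := by
      have h1 : T.card ≤ k + 1 := by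
        calc T.card ≤ (Finset.range (k + 1)).card := Finset.card_image_le
          _ = k + 1 := Finset.card_range _
      rw [hTuniv, Finset.card_univ, ← hn] at h1
      exact h1
    have hkn1 : k + 1 = n := by omega
    have : f u = f^[k + 1] v := by rw [Function.iterate_succ_apply', hk]
    rw [hkn1, hfix v] at this
    exact this.symm
  -- build the cycle list
  obtain ⟨m, hm⟩ : ∃ m, n = m + 1 := ⟨n - 1, by omega⟩
  refine ⟨(List.range n).map (fun t => f^[t] w), ?_, ?_, ?_⟩
  · -- Nodup
    refine List.Nodup.map_on ?_ List.nodup_range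
    intro a ha b hb hab
    rw [List.mem_range] at ha hb
    by_contra hne2
    rcases lt_or_gt_of_ne hne2 with h | h
    · exact key a b h (by omega) hab
    · exact key b a h (by omega) hab.symm
  · -- toFinset = univ
    apply Finset.eq_univ_of_forall
    intro x
    rw [List.mem_toFinset, List.mem_map]
    obtain ⟨t, ht, hx⟩ := hrep x
    exact ⟨t, List.mem_range.2 ht, hx⟩
  · -- arc characterization
    have hchain : ((List.range n).map (fun t => f^[t] w)).Chain' A := by
      show List.IsChain A ((List.range n).map (fun t => f^[t] w))
      rw [List.isChain_map, hm]
      rw [List.isChain_range_succ]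
      intro t ht
      rw [Function.iterate_succ_apply']
      exact hf _
    have hlast : ((List.range n).map (fun t => f^[t] w)).getLast? = some (f^[m] w) := by
      rw [hm, List.range_succ, List.map_append]
      simp
    have hhead : ((List.range n).map (fun t => f^[t] w)).head? = some w := by
      rw [hm, List.range_succ_eq_map]
      simp
    intro u v
    constructor
    · intro hA
      have hv : v = f u := hchord u v hA
      obtain ⟨t, ht, hu⟩ := hrep u
      by_cases htm : t = m
      · right
        subst htm
        constructor
        · rw [hlast, hu]
        · rw [hhead]
          have : v = w := by
            rw [hv, ← hu,
              show f (f^[t] w) = f^[t + 1] w from (Function.iterate_succ_apply' f t w).symm,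
              ← hm, hwn]
          rw [this]
      · left
        have htm' : t + 2 ≤ n := by omega
        have hsplit : List.range n
            = List.range t ++ [t, t + 1]
              ++ (List.range (n - (t + 2))).map (fun x => t + 2 + x) := by
          have h1 : n = (t + 2) + (n - (t + 2)) := by omega
          calc List.range n = List.range ((t + 2) + (n - (t + 2))) := by rw [← h1]
            _ = List.range (t + 2)
                ++ (List.range (n - (t + 2))).map (fun x => t + 2 + x) :=
                  List.range_add
            _ = (List.range t ++ (List.range 2).map (fun x => t + x))
                ++ (List.range (n - (t + 2))).map (fun x => t + 2 + x) := by
                  rw [List.range_add]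
            _ = List.range t ++ [t, t + 1]
                ++ (List.range (n - (t + 2))).map (fun x => t + 2 + x) := by
                  norm_num [List.range_succ]
        refine ⟨(List.range t).map (fun t => f^[t] w),
          ((List.range (n - (t + 2))).map (fun x => t + 2 + x)).map (fun t => f^[t] w),
          ?_⟩
        rw [hsplit]
        simp only [List.map_append, List.map_cons, List.map_nil]
        congr 2
        rw [hu, hv, ← hu,
          show f (f^[t] w) = f^[t + 1] w from (Function.iterate_succ_apply' f t w).symm]
    · rintro (hinf | ⟨hlast', hhead'⟩)
      · have := hchain.infix hinf
        rw [List.isChain_cons_cons] at this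
        exact this.1
      · rw [hlast] at hlast'
        rw [hhead] at hhead'
        have hu : u = f^[m] w := by injection hlast' with h; exact h.symm
        have hv : v = w := by injection hhead' with h; exact h.symm
        have : f u = v := by
          rw [hu, hv,
            show f (f^[m] w) = f^[m + 1] w from (Function.iterate_succ_apply' f m w).symm,
            ← hm, hwn]
        rw [← this]
        exact hf u
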